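/- Let g be a nilpotent Lie algebra of real dimension 2n with nilpotent complex structure J, and let φ¹,…,φⁿ be a co-frame of (1,0)-forms with dφⁱ ∈ Λ²⟨φ¹,…,φ^{i−1},φ̄¹,…,φ̄^{i−1}⟩ for each i. Let k be such that dφⁱ = 0 for i ≤ k and dφ^{k+1} ≠ 0. If the (1,1)-part ∂̄φ^{k+1} = Σ_{l,m≤k} C_{l m̄} φˡ∧φ̄ᵐ is nonzero with C_{i j̄} ≠ 0, then the (2k−1)-form η := φ¹∧⋯∧(omit φⁱ)∧⋯∧φ^{k+1}∧φ̄¹∧⋯∧(omit φ̄ʲ)∧⋯∧φ̄ᵏ satisfies dη = ±C_{i j̄} · φ¹∧⋯∧φᵏ∧φ̄¹∧⋯∧φ̄ᵏ. -/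

import Mathlib

noncomputable section

abbrev Vsp : Type := (ℕ ⊕ ℕ) →₀ ℂ
abbrev ExtA : Type := ExteriorAlgebra ℂ Vsp

def φ (j : ℕ) : ExtA := ExteriorAlgebra.ι ℂ (Finsupp.single (Sum.inl j) 1)
def φb (j : ℕ) : ExtA := ExteriorAlgebra.ι ℂ (Finsupp.single (Sum.inr j) 1)

/-- the list [1, …, m] -/
def idx (m : ℕ) : List ℕ := (List.range m).map (· + 1)

namespace Stmt13Aux

def gen (s : ℕ ⊕ ℕ) : ExtA := ExteriorAlgebra.ι ℂ (Finsupp.single s 1)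

def P (L : List (ℕ ⊕ ℕ)) : ExtA := (L.map gen).prod

lemma P_nil : P [] = 1 := rfl

lemma P_cons (a : ℕ ⊕ ℕ) (L : List (ℕ ⊕ ℕ)) : P (a :: L) = gen a * P L := by
  simp [P]

lemma P_append (L₁ L₂ : List (ℕ ⊕ ℕ)) : P (L₁ ++ L₂) = P L₁ * P L₂ := by
  simp [P]

lemma P_singleton (a : ℕ ⊕ ℕ) : P [a] = gen a := by simp [P]

lemma gen_sq (a : ℕ ⊕ ℕ) : gen a * gen a = 0 := ExteriorAlgebra.ι_sq_zero _

lemma gen_swap (a b : ℕ ⊕ ℕ) : gen a * gen b = -(gen b * gen a) := by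
  have h : gen a * gen b + gen b * gen a = 0 :=
    ExteriorAlgebra.ι_add_mul_swap (R := ℂ) (Finsupp.single a 1 : Vsp)
      (Finsupp.single b 1 : Vsp)
  exact eq_neg_of_add_eq_zero_left h

lemma gen_comm (a : ℕ ⊕ ℕ) : ∀ L : List (ℕ ⊕ ℕ),
    gen a * P L = ((-1 : ℂ) ^ L.length) • (P L * gen a)
  | [] => by simp [P_nil]
  | b :: L => by
    rw [P_cons, ← mul_assoc, gen_swap a b, neg_mul, mul_assoc, gen_comm a L]
    rw [mul_smul_comm, ← mul_assoc, ← P_cons]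
    simp only [List.length_cons, pow_succ]
    module

lemma P_mul_gen_of_mem {a : ℕ ⊕ ℕ} {L : List (ℕ ⊕ ℕ)} (h : a ∈ L) :
    P L * gen a = 0 := by
  obtain ⟨X, Y, rfl⟩ := List.append_of_mem h
  rw [P_append, P_cons, mul_assoc, mul_assoc, ← mul_assoc (gen a) (P Y) (gen a),
    gen_comm a Y, smul_mul_assoc, mul_assoc, gen_sq, mul_zero, smul_zero]
  simp

lemma P_perm {L L' : List (ℕ ⊕ ℕ)} (h : L.Perm L') :
    ∃ ε : ℂ, (ε = 1 ∨ ε = -1) ∧ P L = ε • P L' := by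
  induction h with
  | nil => exact ⟨1, Or.inl rfl, by simp⟩
  | cons x _ ih =>
    obtain ⟨ε, hε, hP⟩ := ih
    exact ⟨ε, hε, by rw [P_cons, hP, P_cons, mul_smul_comm]⟩
  | swap x y L =>
    refine ⟨-1, Or.inr rfl, ?_⟩
    rw [P_cons, P_cons, P_cons, P_cons, ← mul_assoc, ← mul_assoc,
      gen_swap y x]
    simp
  | trans _ _ ih₁ ih₂ =>
    obtain ⟨ε₁, hε₁, h₁⟩ := ih₁
    obtain ⟨ε₂, hε₂, h₂⟩ := ih₂
    refine ⟨ε₁ * ε₂, ?_, by rw [h₁, h₂, smul_smul]⟩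
    rcases hε₁ with rfl | rfl <;> rcases hε₂ with rfl | rfl <;> norm_num

lemma d_P_mul (d : ExtA →ₗ[ℂ] ExtA)
    (hleib : ∀ (v : Vsp) (y : ExtA),
      d (ExteriorAlgebra.ι ℂ v * y)
        = d (ExteriorAlgebra.ι ℂ v) * y - ExteriorAlgebra.ι ℂ v * d y) :
    ∀ L : List (ℕ ⊕ ℕ), (∀ s ∈ L, d (gen s) = 0) → ∀ y : ExtA,
      d (P L * y) = ((-1 : ℂ) ^ L.length) • (P L * d y)
  | [], _, y => by simp [P_nil]
  | a :: L, h, y => by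
    rw [P_cons, mul_assoc]
    rw [show gen a * (P L * y) = ExteriorAlgebra.ι ℂ (Finsupp.single a 1) * (P L * y) from rfl]
    rw [hleib (Finsupp.single a 1) (P L * y)]
    have ha : d (gen a) = 0 := h a List.mem_cons_self
    rw [show d (ExteriorAlgebra.ι ℂ (Finsupp.single a 1)) = d (gen a) from rfl, ha,
      zero_mul, zero_sub]
    rw [d_P_mul d hleib L (fun s hs => h s (List.mem_cons_of_mem a hs)) y]
    rw [mul_smul_comm, ← mul_assoc, ← neg_smul]
    simp only [List.length_cons, pow_succ, mul_neg_one, neg_smul]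
    rfl

lemma mem_idx {l m : ℕ} : l ∈ idx m ↔ 1 ≤ l ∧ l ≤ m := by
  simp only [idx, List.mem_map, List.mem_range]
  constructor
  · rintro ⟨a, ha, rfl⟩; omega
  · rintro ⟨h1, h2⟩; exact ⟨l - 1, by omega, by omega⟩

lemma nodup_idx (m : ℕ) : (idx m).Nodup :=
  (List.nodup_range : (List.range m).Nodup).map (fun a b h => by omega)

lemma filter_perm {a : ℕ} : ∀ {l : List ℕ}, l.Nodup → a ∈ l →
    l.Perm (a :: l.filter (· ≠ a))
  | [], _, h => by simp at h
  | b :: t, hnd, h => by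
    rcases List.mem_cons.mp h with rfl | ht
    · have hat : a ∉ t := (List.nodup_cons.mp hnd).1
      have h2 : (a::t).filter (· ≠ a) = t := by
        simp only [List.filter_cons, ne_eq, decide_not, decide_true, Bool.not_true,
          if_false]
        refine List.filter_eq_self.mpr fun x hx => ?_
        simp only [decide_not, ne_eq, Bool.not_eq_true', decide_eq_false_iff_not]
        rintro rfl; exact hat hx
      rw [h2]
    · have hba : b ≠ a := by rintro rfl; exact (List.nodup_cons.mp hnd).1 ht
      have ih := filter_perm (List.nodup_cons.mp hnd).2 ht
      have heq : a :: (b :: t.filter (· ≠ a)) = a :: ((b :: t).filter (· ≠ a)) := by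
        simp [List.filter_cons, hba]
      exact (ih.cons b).trans (heq ▸ List.Perm.swap a b _)

end Stmt13Aux

open Stmt13Aux

set_option maxHeartbeats 1000000

/-- nilpotent complex structure with dφⁱ = 0 for i ≤ k and
dφ^{k+1} with (1,1)-part Σ C_{lm̄} φˡ∧φ̄ᵐ, C_{ij̄} ≠ 0. Then
η = φ¹∧⋯(omit φⁱ)⋯∧φ^{k+1} ∧ φ̄¹∧⋯(omit φ̄ʲ)⋯∧φ̄ᵏ satisfies
dη = ±C_{ij̄}·φ¹∧⋯∧φᵏ∧φ̄¹∧⋯∧φ̄ᵏ. -/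
theorem stmt_13 (n k i j : ℕ) (hk : 1 ≤ k) (hkn : k + 1 ≤ n)
    (hi1 : 1 ≤ i) (hik : i ≤ k) (hj1 : 1 ≤ j) (hjk : j ≤ k)
    (d : ExtA →ₗ[ℂ] ExtA)
    (hleib : ∀ (v : Vsp) (y : ExtA),
      d (ExteriorAlgebra.ι ℂ v * y)
        = d (ExteriorAlgebra.ι ℂ v) * y - ExteriorAlgebra.ι ℂ v * d y)
    (hclosed : ∀ l, 1 ≤ l → l ≤ k → d (φ l) = 0 ∧ d (φb l) = 0)
    (C A B : ℕ → ℕ → ℂ)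
    (hstruct : d (φ (k + 1))
      = (∑ l ∈ Finset.Icc 1 k, ∑ m ∈ Finset.Icc 1 k, C l m • (φ l * φb m))
        + (∑ l ∈ Finset.Icc 1 k, ∑ m ∈ Finset.Icc (l + 1) k, A l m • (φ l * φ m))
        + (∑ l ∈ Finset.Icc 1 k, ∑ m ∈ Finset.Icc (l + 1) k, B l m • (φb l * φb m)))
    (hC : C i j ≠ 0) :
    ∃ ε : ℂ, (ε = 1 ∨ ε = -1) ∧
      d (((((idx k).filter (· ≠ i)) ++ [k + 1]).map φ).prod
          * (((idx k).filter (· ≠ j)).map φb).prod)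
        = (ε * C i j) • (((idx k).map φ).prod * ((idx k).map φb).prod) := by
  classical
  set LA : List (ℕ ⊕ ℕ) := ((idx k).filter (· ≠ i)).map Sum.inl with hLA
  set LB : List (ℕ ⊕ ℕ) := ((idx k).filter (· ≠ j)).map Sum.inr with hLB
  set c : ℕ ⊕ ℕ := Sum.inl (k+1) with hc
  -- helper: products in terms of P
  have hmapφ : ∀ l : List ℕ, (l.map φ).prod = P (l.map Sum.inl) := by
    intro l; simp only [P, List.map_map]; rfl
  have hmapφb : ∀ l : List ℕ, (l.map φb).prod = P (l.map Sum.inr) := by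
    intro l; simp only [P, List.map_map]; rfl
  -- the LHS argument as P of a list
  have hη : ((((idx k).filter (· ≠ i)) ++ [k + 1]).map φ).prod
      * (((idx k).filter (· ≠ j)).map φb).prod = P ((LA ++ [c]) ++ LB) := by
    rw [hmapφ, hmapφb, ← P_append, List.map_append]
    rfl
  -- permutation moving c to the end
  have p₀ : ((LA ++ [c]) ++ LB).Perm ((LA ++ LB) ++ [c]) := by
    rw [List.append_assoc, List.append_assoc]
    exact List.Perm.append_left LA (List.perm_append_comm)
  obtain ⟨ε₀, hε₀, h₀⟩ := P_perm p₀
  -- closedness on LA ++ LB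
  have hd0 : ∀ s ∈ LA ++ LB, d (gen s) = 0 := by
    intro s hs
    rcases List.mem_append.mp hs with h | h
    · obtain ⟨l, hl, rfl⟩ := List.mem_map.mp h
      have hm := mem_idx.mp (List.mem_of_mem_filter hl)
      exact (hclosed l hm.1 hm.2).1
    · obtain ⟨l, hl, rfl⟩ := List.mem_map.mp h
      have hm := mem_idx.mp (List.mem_of_mem_filter hl)
      exact (hclosed l hm.1 hm.2).2
  have hder := d_P_mul d hleib (LA ++ LB) hd0 (gen c)
  have hdc : d (gen c) = (∑ l ∈ Finset.Icc 1 k, ∑ m ∈ Finset.Icc 1 k, C l m • (φ l * φb m))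
        + (∑ l ∈ Finset.Icc 1 k, ∑ m ∈ Finset.Icc (l + 1) k, A l m • (φ l * φ m))
        + (∑ l ∈ Finset.Icc 1 k, ∑ m ∈ Finset.Icc (l + 1) k, B l m • (φb l * φb m)) := hstruct
  -- membership helpers
  have hmemA : ∀ l, 1 ≤ l → l ≤ k → l ≠ i → Sum.inl l ∈ LA ++ LB := by
    intro l h1 h2 h3
    refine List.mem_append.mpr (Or.inl ?_)
    exact List.mem_map.mpr ⟨l, List.mem_filter.mpr ⟨mem_idx.mpr ⟨h1, h2⟩, by simpa using h3⟩, rfl⟩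
  have hmemB : ∀ m, 1 ≤ m → m ≤ k → m ≠ j → Sum.inr m ∈ LA ++ LB := by
    intro m h1 h2 h3
    refine List.mem_append.mpr (Or.inr ?_)
    exact List.mem_map.mpr ⟨m, List.mem_filter.mpr ⟨mem_idx.mpr ⟨h1, h2⟩, by simpa using h3⟩, rfl⟩
  -- killing lemmas
  have hkill : ∀ s t : ℕ ⊕ ℕ, s ∈ LA ++ LB → P (LA ++ LB) * (gen s * gen t) = 0 := by
    intro s t hs
    rw [← mul_assoc, P_mul_gen_of_mem hs, zero_mul]
  have hkill2 : ∀ s t : ℕ ⊕ ℕ, t ∈ LA ++ LB → P (LA ++ LB) * (gen s * gen t) = 0 := by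
    intro s t ht
    rw [gen_swap s t, mul_neg, hkill t s ht, neg_zero]
  -- the three sums
  have hS2 : P (LA ++ LB) * (∑ l ∈ Finset.Icc 1 k, ∑ m ∈ Finset.Icc (l + 1) k,
      A l m • (φ l * φ m)) = 0 := by
    rw [Finset.mul_sum]
    refine Finset.sum_eq_zero fun l hl => ?_
    rw [Finset.mul_sum]
    refine Finset.sum_eq_zero fun m hm => ?_
    rw [mul_smul_comm]
    rw [Finset.mem_Icc] at hl hm
    by_cases hli : l = i
    · rw [show φ l * φ m = gen (Sum.inl l) * gen (Sum.inl m) from rfl,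
        hkill2 _ _ (hmemA m (by omega) hm.2 (by omega)), smul_zero]
    · rw [show φ l * φ m = gen (Sum.inl l) * gen (Sum.inl m) from rfl,
        hkill _ _ (hmemA l hl.1 hl.2 hli), smul_zero]
  have hS3 : P (LA ++ LB) * (∑ l ∈ Finset.Icc 1 k, ∑ m ∈ Finset.Icc (l + 1) k,
      B l m • (φb l * φb m)) = 0 := by
    rw [Finset.mul_sum]
    refine Finset.sum_eq_zero fun l hl => ?_
    rw [Finset.mul_sum]
    refine Finset.sum_eq_zero fun m hm => ?_
    rw [mul_smul_comm]
    rw [Finset.mem_Icc] at hl hm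
    by_cases hlj : l = j
    · rw [show φb l * φb m = gen (Sum.inr l) * gen (Sum.inr m) from rfl,
        hkill2 _ _ (hmemB m (by omega) hm.2 (by omega)), smul_zero]
    · rw [show φb l * φb m = gen (Sum.inr l) * gen (Sum.inr m) from rfl,
        hkill _ _ (hmemB l hl.1 hl.2 hlj), smul_zero]
  have hS1 : P (LA ++ LB) * (∑ l ∈ Finset.Icc 1 k, ∑ m ∈ Finset.Icc 1 k,
      C l m • (φ l * φb m)) = C i j • (P (LA ++ LB) * (gen (Sum.inl i) * gen (Sum.inr j))) := by
    rw [Finset.mul_sum]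
    rw [Finset.sum_eq_single_of_mem i (Finset.mem_Icc.mpr ⟨hi1, hik⟩)]
    · rw [Finset.mul_sum]
      rw [Finset.sum_eq_single_of_mem j (Finset.mem_Icc.mpr ⟨hj1, hjk⟩)]
      · rw [mul_smul_comm]; rfl
      · intro m hm hmj
        rw [Finset.mem_Icc] at hm
        rw [mul_smul_comm, show φ i * φb m = gen (Sum.inl i) * gen (Sum.inr m) from rfl,
          hkill2 _ _ (hmemB m hm.1 hm.2 hmj), smul_zero]
    · intro l hl hli
      rw [Finset.mem_Icc] at hl
      rw [Finset.mul_sum]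
      refine Finset.sum_eq_zero fun m hm => ?_
      rw [mul_smul_comm, show φ l * φb m = gen (Sum.inl l) * gen (Sum.inr m) from rfl,
        hkill _ _ (hmemA l hl.1 hl.2 hli), smul_zero]
  -- product as P of a longer list
  have hPfin : P (LA ++ LB) * (gen (Sum.inl i) * gen (Sum.inr j))
      = P ((LA ++ LB) ++ [Sum.inl i, Sum.inr j]) := by
    simp [P_append, P_cons, P_singleton, P_nil, mul_assoc]
  -- the permutation to the target list
  have qA : ((idx k).filter (· ≠ i) ++ [i]).Perm (idx k) :=
    (List.perm_append_singleton i _).trans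
      (filter_perm (nodup_idx k) (mem_idx.mpr ⟨hi1, hik⟩)).symm
  have qB : ((idx k).filter (· ≠ j) ++ [j]).Perm (idx k) :=
    (List.perm_append_singleton j _).trans
      (filter_perm (nodup_idx k) (mem_idx.mpr ⟨hj1, hjk⟩)).symm
  have hA : (LA ++ [Sum.inl i]).Perm ((idx k).map Sum.inl) := by
    have h := qA.map (Sum.inl : ℕ → ℕ ⊕ ℕ)
    simpa [hLA, List.map_append] using h
  have hB : (LB ++ [Sum.inr j]).Perm ((idx k).map Sum.inr) := by
    have h := qB.map (Sum.inr : ℕ → ℕ ⊕ ℕ)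
    simpa [hLB, List.map_append] using h
  have p₁ : ((LA ++ LB) ++ [Sum.inl i, Sum.inr j]).Perm
      (((idx k).map Sum.inl) ++ ((idx k).map Sum.inr)) := by
    have e1 : (LA ++ LB) ++ [Sum.inl i, Sum.inr j]
        = LA ++ ((LB ++ [Sum.inl i]) ++ [Sum.inr j]) := by
      simp [List.append_assoc]
    have s1 : ((LB ++ [Sum.inl i]) ++ [Sum.inr j]).Perm
        (Sum.inl i :: (LB ++ [Sum.inr j])) := by
      have h := ((List.perm_append_singleton (Sum.inl i) LB).symm).append_right [Sum.inr j]
      simpa using h.symm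
    have e2 : (LA ++ [Sum.inl i]) ++ (LB ++ [Sum.inr j])
        = LA ++ (Sum.inl i :: (LB ++ [Sum.inr j])) := by
      simp
    rw [e1]
    exact (List.Perm.append_left LA s1).trans (e2 ▸ hA.append hB)
  obtain ⟨ε₁, hε₁, h₁⟩ := P_perm p₁
  -- right-hand side as P
  have hrhs : ((idx k).map φ).prod * ((idx k).map φb).prod
      = P (((idx k).map Sum.inl) ++ ((idx k).map Sum.inr)) := by
    rw [hmapφ, hmapφb, ← P_append]
  -- sign
  have hpow : ((-1 : ℂ) ^ (LA ++ LB).length = 1) ∨ ((-1 : ℂ) ^ (LA ++ LB).length = -1) :=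
    neg_one_pow_eq_or ℂ _
  refine ⟨ε₀ * (-1 : ℂ) ^ (LA ++ LB).length * ε₁, ?_, ?_⟩
  · rcases hε₀ with rfl | rfl <;> rcases hε₁ with rfl | rfl <;>
      rcases hpow with h | h <;> rw [h] <;> norm_num
  · have e : P ((LA ++ LB) ++ [c]) = P (LA ++ LB) * gen c := by
      rw [P_append, P_singleton]
    rw [hη, h₀, e, map_smul, hder, hdc, mul_add, mul_add,
      hS1, hS2, hS3, add_zero, add_zero, hPfin, h₁, hrhs]
    rw [smul_smul, smul_smul, smul_smul]
    congr 1
    ring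


end
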